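/- Let v be a real-valued C² function on an open set of ℂ^n ≅ ℝ^{2n} whose complex Hessian (∂²v/∂z_i∂z̄_j) is positive semidefinite at a point x where also the real Hessian D²v(x) is positive semidefinite. Then det(D²v)(x) ≤ 2^{2n} (det(∂²v/∂z_i∂z̄_j)(x))², where D²v is the real 2n×2n Hessian. -/

import Mathlib

open Matrix

/-- AM-GM on eigenvalues: if `N` is PSD with `det N = 1`, then `det (1 + N) ≥ 2 ^ card`. -/
lemma blocki_aux_det_one_add {ι : Type*} [Fintype ι] [DecidableEq ι]
    {N : Matrix ι ι ℝ} (hN : N.PosSemidef) (hdet : N.det = 1) :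
    (2 : ℝ) ^ (Fintype.card ι) ≤ (1 + N).det := by
  have hH := hN.1
  set f : ι → ℝ := hH.eigenvalues with hf
  have hfnn : ∀ i, 0 ≤ f i := hN.eigenvalues_nonneg
  have hprod : ∏ i, f i = 1 := by
    have := hH.det_eq_prod_eigenvalues
    rw [hdet] at this
    simpa using this.symm
  have hst := hH.spectral_theorem
  rw [Unitary.conjStarAlgAut_apply] at hst
  set U : Matrix ι ι ℝ := (hH.eigenvectorUnitary : Matrix ι ι ℝ) with hU
  have hUU : U * star U = 1 := (Matrix.mem_unitaryGroup_iff).mp hH.eigenvectorUnitary.2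
  have h1 : (1 + N) = U * (1 + Matrix.diagonal (RCLike.ofReal ∘ f)) * star U := by
    rw [mul_add, add_mul, mul_one, hUU, ← hst]
  have h2 : (1 + N).det = ∏ i, (1 + f i) := by
    rw [h1, Matrix.det_mul_right_comm, hUU, one_mul,
      ← Matrix.diagonal_one, Matrix.diagonal_add, Matrix.det_diagonal]
    simp [Pi.add_apply]
  rw [h2]
  set P : ℝ := ∏ i, (1 + f i) with hP
  have hPnn : 0 ≤ P := Finset.prod_nonneg fun i _ => by linarith [hfnn i]
  have hsq : ((2:ℝ) ^ Fintype.card ι) ^ 2 ≤ P ^ 2 := by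
    have h4 : ∏ i, (4 * f i) ≤ ∏ i, (1 + f i) ^ 2 := by
      refine Finset.prod_le_prod (fun i _ => mul_nonneg (by norm_num) (hfnn i)) (fun i _ => by nlinarith [sq_nonneg (1 - f i)])
    calc ((2:ℝ) ^ Fintype.card ι) ^ 2 = ∏ _i : ι, (4:ℝ) := by
          rw [Finset.prod_const, Finset.card_univ, ← pow_mul, mul_comm, pow_mul]; norm_num
      _ = ∏ i, (4 * f i) := by rw [Finset.prod_mul_distrib, hprod, Finset.prod_const, mul_one]
      _ ≤ ∏ i, (1 + f i) ^ 2 := h4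
      _ = P ^ 2 := by rw [hP, Finset.prod_pow]
  calc (2:ℝ) ^ Fintype.card ι = Real.sqrt (((2:ℝ) ^ Fintype.card ι) ^ 2) :=
        (Real.sqrt_sq (by positivity)).symm
    _ ≤ Real.sqrt (P ^ 2) := Real.sqrt_le_sqrt hsq
    _ = P := Real.sqrt_sq hPnn


/-- `det [[S, -T],[T, S]] = det (S - iT) * det (S + iT)` over `ℂ`. -/
lemma blocki_aux_det_blocks {k : Type*} [Fintype k] [DecidableEq k] (S T : Matrix k k ℂ) :
    (Matrix.fromBlocks S (-T) T S).det
      = (S - Complex.I • T).det * (S + Complex.I • T).det := by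
  set W : Matrix (k ⊕ k) (k ⊕ k) ℂ :=
    Matrix.fromBlocks 1 1 (Complex.I • 1) (-(Complex.I • 1)) with hWdef
  have hW : W.det ≠ 0 := by
    haveI : Invertible (1 : Matrix k k ℂ) := invertibleOne
    rw [hWdef, Matrix.det_fromBlocks₁₁]
    simp only [Matrix.det_one, one_mul, invOf_one, Matrix.mul_one, Matrix.one_mul]
    have h2 : (-(Complex.I • 1) - Complex.I • (1 : Matrix k k ℂ))
        = (-2 * Complex.I) • (1 : Matrix k k ℂ) := by module
    rw [h2, Matrix.det_smul, Matrix.det_one, mul_one]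
    apply pow_ne_zero
    simp [Complex.ext_iff]
  have key : Matrix.fromBlocks S (-T) T S * W
      = W * Matrix.fromBlocks (S - Complex.I • T) 0 0 (S + Complex.I • T) := by
    rw [hWdef, Matrix.fromBlocks_multiply, Matrix.fromBlocks_multiply]
    have e11 : S * 1 + (-T) * (Complex.I • 1) = 1 * (S - Complex.I • T) + 1 * 0 := by
      simp only [Matrix.mul_one, Matrix.one_mul, Matrix.mul_zero, Matrix.mul_smul,
        Matrix.neg_mul, add_zero]
      module
    have e12 : S * 1 + (-T) * (-(Complex.I • 1)) = 1 * 0 + 1 * (S + Complex.I • T) := by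
      simp only [Matrix.mul_one, Matrix.one_mul, Matrix.mul_zero, Matrix.mul_smul,
        Matrix.neg_mul, Matrix.mul_neg, zero_add, neg_neg]
      module
    have e21 : T * 1 + S * (Complex.I • 1)
        = (Complex.I • 1) * (S - Complex.I • T) + (-(Complex.I • 1)) * 0 := by
      simp only [Matrix.mul_one, Matrix.one_mul, Matrix.mul_zero, Matrix.mul_smul,
        Matrix.smul_mul, Matrix.neg_mul, add_zero, smul_sub, smul_smul, Complex.I_mul_I,
        neg_one_smul]
      module
    have e22 : T * 1 + S * (-(Complex.I • 1))
        = (Complex.I • 1) * 0 + (-(Complex.I • 1)) * (S + Complex.I • T) := by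
      simp only [Matrix.mul_one, Matrix.one_mul, Matrix.mul_zero, Matrix.mul_smul,
        Matrix.smul_mul, Matrix.neg_mul, Matrix.mul_neg, zero_add, smul_add, smul_smul,
        Complex.I_mul_I, neg_one_smul, smul_zero]
      module
    rw [e11, e12, e21, e22]
  have hdets := congrArg Matrix.det key
  rw [Matrix.det_mul, Matrix.det_mul, Matrix.det_fromBlocks_zero₂₁, mul_comm _ W.det] at hdets
  exact mul_left_cancel₀ hW hdets



open ComplexOrder

set_option maxHeartbeats 1000000

open scoped MatrixOrder

/-- Błocki's inequality: if `v` is `C²` on `ℝ^{2n} ≅ ℂ^n` (real coordinates indexed by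
`Fin n ⊕ Fin n`, `x`-parts and `y`-parts), `H` is its real Hessian at a point `x`,
`C` its complex Hessian (`C_{ij} = (1/4)(v_{x_i x_j} + v_{y_i y_j} + i(v_{x_i y_j} − v_{y_i x_j}))`),
and both `H` and `C` are positive semidefinite, then `det H ≤ 2^{2n} (det C)²`. -/
theorem stmt_10 (n : ℕ) (hn : 1 ≤ n)
    (v : ((Fin n ⊕ Fin n) → ℝ) → ℝ) (x : (Fin n ⊕ Fin n) → ℝ)
    (hv : ContDiffAt ℝ 2 v x)
    (H : Matrix (Fin n ⊕ Fin n) (Fin n ⊕ Fin n) ℝ)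
    (hH : ∀ α β : Fin n ⊕ Fin n,
      H α β = iteratedFDeriv ℝ 2 v x ![Pi.single α 1, Pi.single β 1])
    (C : Matrix (Fin n) (Fin n) ℂ)
    (hC : ∀ i j : Fin n,
      C i j = (1 / 4 : ℂ) *
        (((H (Sum.inl i) (Sum.inl j) + H (Sum.inr i) (Sum.inr j) : ℝ) : ℂ)
          + Complex.I * ((H (Sum.inl i) (Sum.inr j) - H (Sum.inr i) (Sum.inl j) : ℝ) : ℂ)))
    (hHpsd : H.PosSemidef) (hCpsd : C.PosSemidef) :
    H.det ≤ 2 ^ (2 * n) * (C.det.re) ^ 2 := by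
  classical
  set A : Matrix (Fin n) (Fin n) ℝ := Matrix.of fun i j => H (Sum.inl i) (Sum.inl j) with hA
  set B : Matrix (Fin n) (Fin n) ℝ := Matrix.of fun i j => H (Sum.inl i) (Sum.inr j) with hB
  set B' : Matrix (Fin n) (Fin n) ℝ := Matrix.of fun i j => H (Sum.inr i) (Sum.inl j) with hB'
  set D : Matrix (Fin n) (Fin n) ℝ := Matrix.of fun i j => H (Sum.inr i) (Sum.inr j) with hD
  have hblock : H = Matrix.fromBlocks A B B' D := by
    ext (i | i) (j | j) <;> rfl
  set J : Matrix (Fin n ⊕ Fin n) (Fin n ⊕ Fin n) ℝ := Matrix.fromBlocks 0 (-1) 1 0 with hJ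
  have hJt : Jᴴ = Matrix.fromBlocks 0 1 (-1) 0 := by
    rw [hJ, Matrix.conjTranspose_eq_transpose_of_trivial, Matrix.fromBlocks_transpose]
    simp
  set K : Matrix (Fin n ⊕ Fin n) (Fin n ⊕ Fin n) ℝ := Jᴴ * H * J with hKdef
  have hK : K = Matrix.fromBlocks D (-B') (-B) A := by
    rw [hKdef, hJt, hJ]
    conv_lhs => rw [hblock]
    rw [Matrix.fromBlocks_multiply, Matrix.fromBlocks_multiply]
    simp
  set S₀ : Matrix (Fin n) (Fin n) ℝ := A + D with hS₀
  set T₀ : Matrix (Fin n) (Fin n) ℝ := B' - B with hT₀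
  have hHK : H + K = Matrix.fromBlocks S₀ (-T₀) T₀ S₀ := by
    rw [hK]
    conv_lhs => rw [hblock]
    ext (i | i) (j | j) <;>
      simp [Matrix.add_apply, Matrix.sub_apply, Matrix.neg_apply, hS₀, hT₀] <;> ring
  -- complex determinant computation
  set Sc : Matrix (Fin n) (Fin n) ℂ := S₀.map Complex.ofReal with hSc
  set Tc : Matrix (Fin n) (Fin n) ℂ := T₀.map Complex.ofReal with hTc
  have hmapHK : (H + K).map Complex.ofReal = Matrix.fromBlocks Sc (-Tc) Tc Sc := by
    have hneg : (-T₀).map Complex.ofReal = -Tc := by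
      ext i j; simp [hTc, Matrix.map_apply, Matrix.neg_apply]
    rw [hHK, Matrix.fromBlocks_map, hneg]
  set r : ℝ := C.det.re with hr
  have hCdet : C.det = (r : ℂ) := by
    have h1 : (starRingEnd ℂ) C.det = C.det := by
      rw [starRingEnd_apply, ← Matrix.det_conjTranspose, hCpsd.1.eq]
    exact (Complex.conj_eq_iff_re.mp h1).symm
  have h4C : Sc - Complex.I • Tc = (4 : ℂ) • C := by
    ext i j
    simp only [Matrix.sub_apply, Matrix.smul_apply, hSc, hTc, Matrix.map_apply, hS₀, hT₀,
      Matrix.add_apply, Matrix.sub_apply, hA, hB, hB', hD, Matrix.of_apply, hC i j,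
      smul_eq_mul]
    push_cast
    ring
  have hplus : (Sc + Complex.I • Tc).det = (starRingEnd ℂ) ((Sc - Complex.I • Tc).det) := by
    rw [RingHom.map_det, RingHom.mapMatrix_apply]
    congr 1
    ext i j
    simp only [Matrix.map_apply, Matrix.sub_apply, Matrix.add_apply, Matrix.smul_apply,
      hSc, hTc, smul_eq_mul, _root_.map_sub, _root_.map_mul, Complex.conj_I,
      Complex.conj_ofReal]
    ring
  have h16 : (H + K).det = 16 ^ n * r ^ 2 := by
    apply Complex.ofReal_injective
    have hmap := RingHom.map_det Complex.ofRealHom (H + K)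
    rw [RingHom.mapMatrix_apply] at hmap
    calc ((H + K).det : ℂ) = ((H + K).map Complex.ofReal).det := hmap
      _ = (Matrix.fromBlocks Sc (-Tc) Tc Sc).det := by rw [hmapHK]
      _ = (Sc - Complex.I • Tc).det * (Sc + Complex.I • Tc).det := blocki_aux_det_blocks Sc Tc
      _ = ((4 : ℂ) • C).det * (starRingEnd ℂ) (((4 : ℂ) • C).det) := by rw [hplus, h4C]
      _ = ((16 ^ n * r ^ 2 : ℝ) : ℂ) := by
          rw [Matrix.det_smul, hCdet, Fintype.card_fin, _root_.map_mul, map_pow,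
            Complex.conj_ofReal]
          have h4 : (starRingEnd ℂ) (4 : ℂ) = 4 := by
            rw [show (4:ℂ) = ((4:ℝ):ℂ) by norm_num, Complex.conj_ofReal]
          rw [h4]
          push_cast
          rw [show (16:ℂ) = 4 * 4 by norm_num, mul_pow]
          ring
  -- Minkowski-type estimate
  by_cases hd : H.det = 0
  · rw [hd]; positivity
  · set R : Matrix (Fin n ⊕ Fin n) (Fin n ⊕ Fin n) ℝ := CFC.sqrt H with hR
    have hRR : R * R = H := CFC.sqrt_mul_sqrt_self H hHpsd.nonneg
    have hRH : Rᴴ = R := (CFC.sqrt_nonneg H).posSemidef.1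
    have hdetR : R.det ≠ 0 := fun h => hd (by rw [← hRR, Matrix.det_mul, h, zero_mul])
    have hRu : IsUnit R.det := isUnit_iff_ne_zero.mpr hdetR
    have hRinv' : R⁻¹ * R = 1 := Matrix.nonsing_inv_mul R hRu
    set Sm : Matrix (Fin n ⊕ Fin n) (Fin n ⊕ Fin n) ℝ := R * J * R⁻¹ with hSm
    set N : Matrix (Fin n ⊕ Fin n) (Fin n ⊕ Fin n) ℝ := Smᴴ * Sm with hN
    have hNpsd : N.PosSemidef := Matrix.posSemidef_conjTranspose_mul_self Sm
    have hJJ : J * J = -1 := by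
      rw [hJ, Matrix.fromBlocks_multiply]
      ext (i | i) (j | j) <;>
        simp [Matrix.fromBlocks_apply₁₁, Matrix.fromBlocks_apply₁₂, Matrix.fromBlocks_apply₂₁,
          Matrix.fromBlocks_apply₂₂, Matrix.one_apply, Matrix.neg_apply]
    have hdetJsq : J.det * J.det = 1 := by
      rw [← Matrix.det_mul, hJJ, Matrix.det_neg, Matrix.det_one, mul_one, Fintype.card_sum,
        Fintype.card_fin, ← two_mul, pow_mul]
      norm_num
    have hSmR : Sm * R = R * J := by rw [hSm, Matrix.mul_assoc, hRinv', Matrix.mul_one]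
    have hRSm : R * Smᴴ = Jᴴ * R := by
      have h := congrArg Matrix.conjTranspose hSmR
      rw [Matrix.conjTranspose_mul R J, Matrix.conjTranspose_mul Sm R, hRH] at h
      exact h
    have hdetSm : Sm.det * R.det = R.det * J.det := by
      rw [← Matrix.det_mul, hSmR, Matrix.det_mul]
    have hdetN : N.det = 1 := by
      have h1 : Sm.det = J.det := by
        apply mul_right_cancel₀ hdetR
        rw [hdetSm, mul_comm]
      rw [hN, Matrix.det_mul, Matrix.det_conjTranspose, star_trivial, h1, hdetJsq]
    have hsplit : H + K = Rᴴ * (1 + N) * R := by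
      rw [hRH, Matrix.mul_add, Matrix.add_mul, Matrix.mul_one, hRR]
      congr 1
      calc K = Jᴴ * H * J := hKdef
        _ = (Jᴴ * R) * (R * J) := by rw [← hRR]; simp only [Matrix.mul_assoc]
        _ = (R * Smᴴ) * (Sm * R) := by rw [hRSm, hSmR]
        _ = R * N * R := by rw [hN]; simp only [Matrix.mul_assoc]
    have hdetsplit : (H + K).det = H.det * (1 + N).det := by
      calc (H + K).det = (Rᴴ * (1 + N) * R).det := by rw [hsplit]
        _ = R.det * (1 + N).det * R.det := by rw [Matrix.det_mul, Matrix.det_mul, hRH]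
        _ = (R.det * R.det) * (1 + N).det := by ring
        _ = H.det * (1 + N).det := by rw [← Matrix.det_mul, hRR]
    have hineq : (2 : ℝ) ^ (2 * n) ≤ (1 + N).det := by
      have h := blocki_aux_det_one_add hNpsd hdetN
      rwa [Fintype.card_sum, Fintype.card_fin, ← two_mul] at h
    have hHdetpos : 0 < H.det := by
      have h1 : H.det = R.det ^ 2 := by rw [← hRR, Matrix.det_mul, sq]
      rw [h1]
      exact pow_two_pos_of_ne_zero hdetR
    have hc : (0 : ℝ) < 2 ^ (2 * n) := by positivity
    have hkey : H.det * (2 : ℝ) ^ (2 * n) ≤ 2 ^ (2 * n) * (2 ^ (2 * n) * r ^ 2) := by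
      have h1 : H.det * (2 : ℝ) ^ (2 * n) ≤ H.det * (1 + N).det :=
        mul_le_mul_of_nonneg_left hineq hHdetpos.le
      have h2 : (16 : ℝ) ^ n = 2 ^ (2 * n) * 2 ^ (2 * n) := by
        rw [← pow_add, show (16 : ℝ) = 2 ^ 4 by norm_num, ← pow_mul]
        congr 1
        omega
      rw [← hdetsplit, h16, h2] at h1
      linarith [h1]
    have := (mul_le_mul_iff_right₀ hc).mp (by linarith [hkey] : 2 ^ (2 * n) * H.det ≤ 2 ^ (2 * n) * (2 ^ (2 * n) * r ^ 2))
    simpa [hr] using this
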